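/- arXiv:math/0405289 — 2 statements merged into one kernel-verified Lean document; each statement's English description precedes it below -/
import Mathlib

section
/- Let ξ be a finite atomless Borel measure on ℝ₊ with finite first moment, f_e a nonincreasing probability density on ℝ₊, G^x(y)=f_e(y)−f_e(x+y), H_ξ′(z)=ξ((z,∞)), and L_ξ^x(u) = G^x(u)H_ξ′(0) − ∫₀^u G^x(u−v) ξ(dv). Then for every x ≥ 0, ∫₀^∞ |L_ξ^x(u)| du ≤ 3 ξ(ℝ₊). -/
open MeasureTheory Set

theorem stmt9 (ξ : Measure ℝ) [IsFiniteMeasure ξ] (hξ : ξ ≠ 0) (hsupp : ξ (Iio 0) = 0)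
    (hatom : ∀ x : ℝ, ξ {x} = 0) (hint : Integrable (fun y => y) ξ)
    (fe : ℝ → ℝ) (hfe0 : ∀ x, 0 ≤ fe x) (hfem : AntitoneOn fe (Ici 0))
    (hfei : IntegrableOn fe (Ici 0)) (hfe1 : (∫ x in Ici (0:ℝ), fe x) = 1)
    (L : ℝ → ℝ → ℝ)
    (hL : ∀ x u, L x u = (fe u - fe (x + u)) * (ξ (Ioi (0:ℝ))).toReal -
      ∫ v in Icc (0:ℝ) u, (fe (u - v) - fe (x + (u - v))) ∂ξ) :
    ∀ x ≥ (0:ℝ), (∫ u in Ici (0:ℝ), |L x u|) ≤ 3 * (ξ (Ici 0)).toReal := by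
  intro x hx
  set c : ℝ := (ξ (Ioi (0:ℝ))).toReal with hcdef
  have hc0 : 0 ≤ c := ENNReal.toReal_nonneg
  set fe' : ℝ → ℝ := fun y => fe (max y 0) with hfe'def
  have hfe'anti : Antitone fe' := fun a b hab =>
    hfem (le_max_right a 0) (le_max_right b 0) (max_le_max hab le_rfl)
  have hfe'meas : Measurable fe' := hfe'anti.measurable
  have hfe'eq : ∀ y : ℝ, 0 ≤ y → fe' y = fe y := fun y hy => by
    simp only [hfe'def, max_eq_left hy]
  have hfe'nn : ∀ y, 0 ≤ fe' y := fun y => hfe0 _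
  set G : ℝ → ℝ := fun y => fe' y - fe' (x + y) with hGdef
  have hGnn : ∀ y, 0 ≤ G y :=
    fun y => sub_nonneg.2 (hfe'anti (le_add_of_nonneg_left hx))
  have hGmeas : Measurable G := hfe'meas.sub (hfe'meas.comp (measurable_const_add x))
  have hGle : ∀ y, G y ≤ fe' y := fun y => sub_le_self _ (hfe'nn _)
  -- integrability of fe' and G on Ici 0
  have hfe'int : IntegrableOn fe' (Ici 0) :=
    hfei.congr_fun (fun y hy => (hfe'eq y hy).symm) measurableSet_Ici
  have hfe'1 : (∫ y in Ici (0:ℝ), fe' y) = 1 := by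
    rw [← hfe1]
    exact setIntegral_congr_fun measurableSet_Ici (fun y hy => hfe'eq y hy)
  have hshiftint : IntegrableOn (fun y => fe' (x + y)) (Ici 0) := by
    refine Integrable.mono hfe'int ((hfe'meas.comp (measurable_const_add x)).aestronglyMeasurable) ?_
    refine ae_of_all _ (fun y => ?_)
    simp only [Real.norm_eq_abs, abs_of_nonneg (hfe'nn _)]
    exact hfe'anti (le_add_of_nonneg_left hx)
  have hGint : IntegrableOn G (Ici 0) := hfe'int.sub hshiftint
  have hGint1 : (∫ y in Ici (0:ℝ), G y) ≤ 1 := by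
    rw [hGdef]
    have := integral_sub hfe'int hshiftint
    rw [this, hfe'1]
    have h2 : 0 ≤ ∫ y in Ici (0:ℝ), fe' (x + y) :=
      integral_nonneg (fun y => hfe'nn _)
    linarith
  -- lintegral of G on Ici 0 is ≤ 1
  have hGlint : (∫⁻ y in Ici (0:ℝ), ENNReal.ofReal (G y)) ≤ 1 := by
    rw [← ofReal_integral_eq_lintegral_ofReal hGint (ae_of_all _ hGnn)]
    calc ENNReal.ofReal (∫ y in Ici (0:ℝ), G y) ≤ ENNReal.ofReal 1 :=
          ENNReal.ofReal_le_ofReal hGint1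
      _ = 1 := ENNReal.ofReal_one
  -- the product function
  set F : ℝ × ℝ → ENNReal :=
    fun p => indicator {p : ℝ × ℝ | 0 ≤ p.2 ∧ p.2 ≤ p.1}
      (fun p => ENNReal.ofReal (G (p.1 - p.2))) p with hFdef
  have hsetmeas : MeasurableSet {p : ℝ × ℝ | 0 ≤ p.2 ∧ p.2 ≤ p.1} :=
    (measurableSet_le measurable_const measurable_snd).inter
      (measurableSet_le measurable_snd measurable_fst)
  have hFmeas : Measurable F :=
    ((hGmeas.comp (measurable_fst.sub measurable_snd)).ennreal_ofReal).indicator hsetmeas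
  -- inner lintegral equals the set lintegral
  have hFinner : ∀ u : ℝ, (∫⁻ v, F (u, v) ∂ξ)
      = ∫⁻ v in Icc 0 u, ENNReal.ofReal (G (u - v)) ∂ξ := by
    intro u
    rw [← lintegral_indicator measurableSet_Icc]
    refine lintegral_congr (fun v => ?_)
    by_cases h : v ∈ Icc (0:ℝ) u
    · rw [indicator_of_mem h]
      exact indicator_of_mem (by exact ⟨h.1, h.2⟩) _
    · rw [indicator_of_notMem h]
      exact indicator_of_notMem (by simpa [mem_Icc] using h) _
  set g2 : ℝ → ℝ := fun u => (∫⁻ v, F (u, v) ∂ξ).toReal with hg2def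
  have hg2meas : Measurable g2 := (hFmeas.lintegral_prod_right').ennreal_toReal
  have hg2nn : ∀ u, 0 ≤ g2 u := fun u => ENNReal.toReal_nonneg
  -- double lintegral bound via Tonelli
  have hdouble : (∫⁻ u in Ici (0:ℝ), ∫⁻ v, F (u, v) ∂ξ) ≤ ξ univ := by
    have hswap : (∫⁻ u in Ici (0:ℝ), ∫⁻ v, F (u, v) ∂ξ)
        = ∫⁻ v, (∫⁻ u in Ici (0:ℝ), F (u, v)) ∂ξ := by
      exact lintegral_lintegral_swap (μ := volume.restrict (Ici (0:ℝ))) (ν := ξ) (f := fun u v => F (u, v)) (by exact hFmeas.aemeasurable)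
    rw [hswap]
    have hbound : ∀ᵐ v ∂ξ, (∫⁻ u in Ici (0:ℝ), F (u, v)) ≤ 1 := by
      have hae : ∀ᵐ v ∂ξ, 0 ≤ v := by
        rw [ae_iff]
        simp only [not_le]; exact hsupp
      filter_upwards [hae] with v hv
      have heq : ∀ u : ℝ, F (u, v) = indicator (Ici v) (fun u => ENNReal.ofReal (G (u - v))) u := by
        intro u
        simp only [hFdef, indicator, mem_setOf_eq, mem_Ici, hv, true_and]
      calc (∫⁻ u in Ici (0:ℝ), F (u, v))
          = ∫⁻ u in Ici (0:ℝ), indicator (Ici v) (fun u => ENNReal.ofReal (G (u - v))) u := by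
            exact lintegral_congr (fun u => heq u)
        _ = ∫⁻ u in Ici v, ENNReal.ofReal (G (u - v)) := by
            rw [lintegral_indicator measurableSet_Ici, Measure.restrict_restrict measurableSet_Ici]
            congr 1
            rw [Ici_inter_Ici, max_eq_left hv]
        _ = ∫⁻ y in Ici (0:ℝ), ENNReal.ofReal (G y) := by
            have : ∀ u : ℝ, indicator (Ici v) (fun u => ENNReal.ofReal (G (u - v))) u
                = indicator (Ici (0:ℝ)) (fun y => ENNReal.ofReal (G y)) (u + -v) := by
              intro u
              by_cases h : v ≤ u
              · rw [indicator_of_mem (show u ∈ Ici v from h),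
                  indicator_of_mem (show u + -v ∈ Ici (0:ℝ) by simp only [mem_Ici]; linarith)]
                ring_nf
              · rw [indicator_of_notMem (show u ∉ Ici v by simpa using h),
                  indicator_of_notMem (show u + -v ∉ Ici (0:ℝ) by simp only [mem_Ici, not_le]; linarith [lt_of_not_ge h])]
            rw [← lintegral_indicator measurableSet_Ici, ← lintegral_indicator measurableSet_Ici]
            calc (∫⁻ u, indicator (Ici v) (fun u => ENNReal.ofReal (G (u - v))) u)
                = ∫⁻ u, indicator (Ici (0:ℝ)) (fun y => ENNReal.ofReal (G y)) (u + -v) :=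
                  lintegral_congr this
              _ = ∫⁻ y, indicator (Ici (0:ℝ)) (fun y => ENNReal.ofReal (G y)) y :=
                  lintegral_add_right_eq_self _ _
        _ ≤ 1 := hGlint
    calc (∫⁻ v, (∫⁻ u in Ici (0:ℝ), F (u, v)) ∂ξ) ≤ ∫⁻ v, 1 ∂ξ := lintegral_mono_ae hbound
      _ = ξ univ := by simp
  -- integrability of g2 on Ici 0
  have hg2lint : (∫⁻ u in Ici (0:ℝ), ENNReal.ofReal (g2 u)) ≤ ξ univ := by
    refine le_trans (lintegral_mono (fun u => ?_)) hdouble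
    exact ENNReal.ofReal_toReal_le
  have hg2int : IntegrableOn g2 (Ici 0) := by
    refine ⟨hg2meas.aestronglyMeasurable, ?_⟩
    rw [hasFiniteIntegral_iff_ofReal (ae_of_all _ hg2nn)]
    exact lt_of_le_of_lt hg2lint (measure_lt_top ξ univ)
  have hg2intval : (∫ u in Ici (0:ℝ), g2 u) ≤ (ξ univ).toReal := by
    rw [integral_eq_lintegral_of_nonneg_ae (ae_of_all _ hg2nn) hg2meas.aestronglyMeasurable]
    exact ENNReal.toReal_mono (measure_ne_top ξ univ) hg2lint
  -- the majorant
  set g : ℝ → ℝ := fun u => G u * c + g2 u with hgdef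
  have hgint : IntegrableOn g (Ici 0) := (hGint.mul_const c).add hg2int
  -- pointwise bound
  have hptwise : ∀ u : ℝ, 0 ≤ u → |L x u| ≤ g u := by
    intro u hu
    have h1 : fe u - fe (x + u) = G u := by
      rw [hGdef]
      simp only [hfe'eq u hu, hfe'eq (x + u) (by linarith)]
    have h2 : (∫ v in Icc (0:ℝ) u, (fe (u - v) - fe (x + (u - v))) ∂ξ) = g2 u := by
      have hcongr : (∫ v in Icc (0:ℝ) u, (fe (u - v) - fe (x + (u - v))) ∂ξ)
          = ∫ v in Icc (0:ℝ) u, G (u - v) ∂ξ := by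
        refine setIntegral_congr_fun measurableSet_Icc (fun v hv => ?_)
        have h3 : (0:ℝ) ≤ u - v := by linarith [hv.2]
        simp only [hGdef, hfe'eq (u - v) h3, hfe'eq (x + (u - v)) (by linarith)]
      rw [hcongr, hg2def]
      rw [integral_eq_lintegral_of_nonneg_ae (ae_of_all _ (fun v => hGnn (u - v)))
        ((hGmeas.comp (measurable_const.sub measurable_id)).aestronglyMeasurable)]
      rw [← hFinner u]
    rw [hL x u, h1, h2]
    have hA : 0 ≤ G u * c := mul_nonneg (hGnn u) hc0
    have hB : 0 ≤ g2 u := hg2nn u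
    rw [abs_sub_comm, abs_sub_le_iff]
    constructor <;> simp only [hgdef] <;> linarith
  -- final estimate
  have hLbound : (∫ u in Ici (0:ℝ), |L x u|) ≤ ∫ u in Ici (0:ℝ), g u := by
    refine integral_mono_of_nonneg (ae_of_all _ (fun u => abs_nonneg _)) hgint ?_
    exact (ae_restrict_iff' measurableSet_Ici).2 (ae_of_all _ (fun u hu => hptwise u hu))
  have huniv : ξ univ = ξ (Ici 0) := by
    rw [← measure_add_measure_compl (measurableSet_Ici (a := (0:ℝ)))]
    simp [compl_Ici, Iio, hsupp]
    rw [show {x : ℝ | x < 0} = Iio 0 from rfl, hsupp]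
  have hcle : c ≤ (ξ (Ici 0)).toReal := by
    rw [hcdef]
    exact ENNReal.toReal_mono (measure_ne_top ξ _) (measure_mono Ioi_subset_Ici_self)
  have hgval : (∫ u in Ici (0:ℝ), g u) ≤ 2 * (ξ (Ici 0)).toReal := by
    rw [hgdef]
    have hsplit : (∫ u in Ici (0:ℝ), (G u * c + g2 u))
        = (∫ u in Ici (0:ℝ), G u * c) + ∫ u in Ici (0:ℝ), g2 u :=
      integral_add (hGint.mul_const c) hg2int
    rw [hsplit]
    have h1 : (∫ u in Ici (0:ℝ), G u * c) = (∫ u in Ici (0:ℝ), G u) * c :=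
      integral_mul_const c _
    have h1' : (∫ u in Ici (0:ℝ), G u * c) ≤ c := by
      rw [h1]
      calc (∫ u in Ici (0:ℝ), G u) * c ≤ 1 * c :=
            mul_le_mul_of_nonneg_right hGint1 hc0
        _ = c := one_mul c
    have h2 : (∫ u in Ici (0:ℝ), g2 u) ≤ (ξ (Ici 0)).toReal := by
      rw [← huniv]; exact hg2intval
    linarith
  have h3 : (ξ (Ici 0)).toReal ≥ 0 := ENNReal.toReal_nonneg
  linarith
end

section
/- Let ξ be a finite atomless Borel measure on ℝ₊ with finite first moment, ν_e a probability measure with nonincreasing density f_e on ℝ₊. Suppose for some ε > 0 that ⟨χ^{1+ε}, ν_e⟩ < ∞ and ⟨χ^{1+ε}, ξ⟩ < ∞. Then for each x ≥ 0 and all u > 0, (G^x * H_ξ)(u) ≤ K_ξ u^{−1−ε}, where K_ξ = (2^{1+ε}+1)(⟨χ^{1+ε},ν_e⟩⟨1,ξ⟩ + ⟨χ^{1+ε},ξ⟩), G^x(y)=f_e(y)−f_e(x+y), and (G^x*H_ξ)(u)=∫₀^u G^x(u−z)ξ((z,∞))dz. -/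
open MeasureTheory Set

theorem stmt10 (ξ : Measure ℝ) [IsFiniteMeasure ξ] (hsupp : ξ (Iio 0) = 0)
    (hatom : ∀ x : ℝ, ξ {x} = 0) (hint : Integrable (fun y => y) ξ)
    (fe : ℝ → ℝ) (hfe0 : ∀ x, 0 ≤ fe x) (hfem : AntitoneOn fe (Ici 0))
    (hfei : IntegrableOn fe (Ici 0)) (hfe1 : (∫ x in Ici (0:ℝ), fe x) = 1)
    (ε : ℝ) (hε : 0 < ε)
    (hmom : IntegrableOn (fun y => y ^ (1 + ε) * fe y) (Ici 0))
    (hmomξ : Integrable (fun y => y ^ (1 + ε)) ξ) :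
    ∀ x ≥ (0:ℝ), ∀ u > (0:ℝ),
      (∫ z in (0:ℝ)..u, (fe (u - z) - fe (x + (u - z))) * (ξ (Ioi z)).toReal) ≤
        ((2 : ℝ) ^ (1 + ε) + 1) *
          ((∫ y in Ici (0:ℝ), y ^ (1 + ε) * fe y) * (ξ (Ici 0)).toReal +
            ∫ y, y ^ (1 + ε) ∂ξ) * u ^ (-(1 + ε)) := by
  intro x hx u hu
  set H : ℝ → ℝ := fun z => (ξ (Ioi z)).toReal with hH
  have hHanti : Antitone H := fun a b hab =>
    ENNReal.toReal_mono (measure_ne_top _ _) (measure_mono (Ioi_subset_Ioi hab))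
  have hHmeas : Measurable H := hHanti.measurable
  have hH0 : ∀ z, 0 ≤ H z := fun z => ENNReal.toReal_nonneg
  set C : ℝ := (ξ (Ici 0)).toReal with hCdef
  have hC0 : 0 ≤ C := ENNReal.toReal_nonneg
  have hHbd : ∀ z, ‖H z‖ ≤ (ξ univ).toReal := fun z => by
    rw [Real.norm_eq_abs, abs_of_nonneg (hH0 z)]
    exact ENNReal.toReal_mono (measure_ne_top _ _) (measure_mono (subset_univ _))
  have hHleC : ∀ z : ℝ, 0 ≤ z → H z ≤ C := fun z hz =>
    ENNReal.toReal_mono (measure_ne_top _ _)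
      (measure_mono (fun y hy => le_trans hz (le_of_lt hy)))
  set Me : ℝ := ∫ y in Ici (0:ℝ), y ^ (1 + ε) * fe y with hMedef
  set Mξ : ℝ := ∫ y, y ^ (1 + ε) ∂ξ with hMξdef
  have hMe0 : 0 ≤ Me :=
    setIntegral_nonneg measurableSet_Ici
      (fun y hy => mul_nonneg (Real.rpow_nonneg hy _) (hfe0 y))
  have haenn : ∀ᵐ y ∂ξ, 0 ≤ y := by
    have h1 : ∀ᵐ y ∂ξ, y ∉ Iio 0 := by
      rw [ae_iff]; convert hsupp using 2; ext a; simp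
    filter_upwards [h1] with y hy
    simpa using hy
  have haepow : ∀ᵐ y ∂ξ, 0 ≤ y ^ (1 + ε) := by
    filter_upwards [haenn] with y hy
    exact Real.rpow_nonneg hy _
  have hMξ0 : 0 ≤ Mξ := integral_nonneg_of_ae haepow
  have hu2 : (0:ℝ) < u / 2 := by linarith
  -- Markov bound for ξ
  have markovB : ∀ z : ℝ, 0 < z → H z ≤ Mξ * z ^ (-(1 + ε)) := by
    intro z hz
    have hzpow : (0:ℝ) < z ^ (1 + ε) := Real.rpow_pos_of_pos hz _
    have h1 : z ^ (1 + ε) * H z ≤ Mξ := by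
      have e1 : z ^ (1 + ε) * H z = ∫ _ in Ioi z, z ^ (1 + ε) ∂ξ := by
        rw [setIntegral_const, smul_eq_mul, mul_comm]
        rfl
      rw [e1]
      have h2 : (∫ _ in Ioi z, z ^ (1 + ε) ∂ξ) ≤ ∫ y in Ioi z, y ^ (1 + ε) ∂ξ :=
        setIntegral_mono_on
          (integrableOn_const (measure_ne_top _ _))
          hmomξ.integrableOn measurableSet_Ioi
          (fun y hy => Real.rpow_le_rpow hz.le (le_of_lt hy) (by positivity))
      exact h2.trans (setIntegral_le_integral hmomξ haepow)
    calc H z = (z ^ (1 + ε) * H z) / z ^ (1 + ε) := by field_simp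
    _ ≤ Mξ / z ^ (1 + ε) := by gcongr
    _ = Mξ * z ^ (-(1 + ε)) := by rw [Real.rpow_neg hz.le, div_eq_mul_inv]
  -- Markov bound for fe tail
  have markovA : (∫ y in Ici (u / 2), fe y) ≤ (u / 2) ^ (-(1 + ε)) * Me := by
    have hsub : Ici (u / 2) ⊆ Ici (0:ℝ) := Ici_subset_Ici.mpr hu2.le
    have step1 : (∫ y in Ici (u / 2), fe y) ≤
        ∫ y in Ici (u / 2), (u / 2) ^ (-(1 + ε)) * (y ^ (1 + ε) * fe y) := by
      refine setIntegral_mono_on (hfei.mono_set hsub)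
        ((hmom.mono_set hsub).const_mul _) measurableSet_Ici (fun y hy => ?_)
      have hy0 : (0:ℝ) < y := lt_of_lt_of_le hu2 hy
      have h1 : (1:ℝ) ≤ (u / 2) ^ (-(1 + ε)) * y ^ (1 + ε) := by
        rw [Real.rpow_neg hu2.le]
        rw [inv_mul_eq_div, le_div_iff₀ (Real.rpow_pos_of_pos hu2 _)]
        simpa using Real.rpow_le_rpow hu2.le hy (by positivity)
      calc fe y = 1 * fe y := (one_mul _).symm
      _ ≤ ((u / 2) ^ (-(1 + ε)) * y ^ (1 + ε)) * fe y :=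
          mul_le_mul_of_nonneg_right h1 (hfe0 y)
      _ = (u / 2) ^ (-(1 + ε)) * (y ^ (1 + ε) * fe y) := mul_assoc _ _ _
    have step2 : (∫ y in Ici (u / 2), y ^ (1 + ε) * fe y) ≤ Me := by
      refine setIntegral_mono_set hmom ?_ (HasSubset.Subset.eventuallyLE hsub)
      refine (ae_restrict_iff' measurableSet_Ici).mpr (ae_of_all _ fun y hy => ?_)
      exact mul_nonneg (Real.rpow_nonneg hy _) (hfe0 y)
    calc (∫ y in Ici (u / 2), fe y) ≤
        ∫ y in Ici (u / 2), (u / 2) ^ (-(1 + ε)) * (y ^ (1 + ε) * fe y) := step1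
    _ = (u / 2) ^ (-(1 + ε)) * ∫ y in Ici (u / 2), y ^ (1 + ε) * fe y := by
        rw [integral_const_mul]
    _ ≤ (u / 2) ^ (-(1 + ε)) * Me :=
        mul_le_mul_of_nonneg_left step2 (Real.rpow_nonneg hu2.le _)
  -- interval integrabilities
  have hmono1 : MonotoneOn (fun z => fe (u - z)) (Icc 0 u) := by
    intro a ha b hb hab
    exact hfem (mem_Ici.mpr (by linarith [hb.2])) (mem_Ici.mpr (by linarith [ha.2]))
      (by linarith)
  have hmono2 : MonotoneOn (fun z => fe (x + (u - z))) (Icc 0 u) := by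
    intro a ha b hb hab
    exact hfem (mem_Ici.mpr (by linarith [hb.2])) (mem_Ici.mpr (by linarith [ha.2]))
      (by linarith)
  have ii1 : IntervalIntegrable (fun z => fe (u - z)) volume 0 u :=
    MonotoneOn.intervalIntegrable (by rwa [uIcc_of_le hu.le])
  have ii2 : IntervalIntegrable (fun z => fe (x + (u - z))) volume 0 u :=
    MonotoneOn.intervalIntegrable (by rwa [uIcc_of_le hu.le])
  have mkProd : ∀ g : ℝ → ℝ, IntervalIntegrable g volume 0 u →
      IntervalIntegrable (fun z => g z * H z) volume 0 u := by
    intro g hg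
    rw [intervalIntegrable_iff_integrableOn_Ioc_of_le hu.le] at hg ⊢
    have := hg.bdd_mul hHmeas.aestronglyMeasurable (ae_of_all _ fun z => hHbd z)
    exact this.congr (ae_of_all _ fun z => mul_comm _ _)
  have iiP1 : IntervalIntegrable (fun z => fe (u - z) * H z) volume 0 u := mkProd _ ii1
  have iiP2 : IntervalIntegrable (fun z => fe (x + (u - z)) * H z) volume 0 u := mkProd _ ii2
  have iiD : IntervalIntegrable (fun z => (fe (u - z) - fe (x + (u - z))) * H z) volume 0 u := by
    simpa [sub_mul] using iiP1.sub iiP2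
  have hsub1 : uIcc 0 (u / 2) ⊆ uIcc 0 u := by
    rw [uIcc_of_le hu.le, uIcc_of_le hu2.le]
    exact Icc_subset_Icc le_rfl (by linarith)
  have hsub2 : uIcc (u / 2) u ⊆ uIcc 0 u := by
    rw [uIcc_of_le hu.le, uIcc_of_le (by linarith : u / 2 ≤ u)]
    exact Icc_subset_Icc hu2.le le_rfl
  -- step 1 : drop the subtracted term
  have step1 : (∫ z in (0:ℝ)..u, (fe (u - z) - fe (x + (u - z))) * H z) ≤
      ∫ z in (0:ℝ)..u, fe (u - z) * H z := by
    refine intervalIntegral.integral_mono_on hu.le iiD iiP1 (fun z _ => ?_)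
    exact mul_le_mul_of_nonneg_right (sub_le_self _ (hfe0 _)) (hH0 z)
  -- split
  have split : (∫ z in (0:ℝ)..u, fe (u - z) * H z) =
      (∫ z in (0:ℝ)..(u / 2), fe (u - z) * H z) +
        ∫ z in (u / 2)..u, fe (u - z) * H z :=
    (intervalIntegral.integral_add_adjacent_intervals (iiP1.mono_set hsub1)
      (iiP1.mono_set hsub2)).symm
  -- term 1
  have term1 : (∫ z in (0:ℝ)..(u / 2), fe (u - z) * H z) ≤
      (u / 2) ^ (-(1 + ε)) * Me * C := by
    have h1 : (∫ z in (0:ℝ)..(u / 2), fe (u - z) * H z) ≤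
        ∫ z in (0:ℝ)..(u / 2), fe (u - z) * C := by
      refine intervalIntegral.integral_mono_on hu2.le (iiP1.mono_set hsub1)
        ((ii1.mono_set hsub1).mul_const C) (fun z hz => ?_)
      exact mul_le_mul_of_nonneg_left (hHleC z hz.1) (hfe0 _)
    have h2 : (∫ z in (0:ℝ)..(u / 2), fe (u - z) * C) =
        (∫ y in (u / 2)..u, fe y) * C := by
      rw [intervalIntegral.integral_mul_const]
      congr 1
      have := intervalIntegral.integral_comp_sub_left (a := (0:ℝ)) (b := u / 2) fe u
      rw [this, show u - u / 2 = u / 2 by ring, show u - 0 = u by ring]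
    have h3 : (∫ y in (u / 2)..u, fe y) ≤ ∫ y in Ici (u / 2), fe y := by
      rw [intervalIntegral.integral_of_le (by linarith : u / 2 ≤ u)]
      refine setIntegral_mono_set (hfei.mono_set (Ici_subset_Ici.mpr hu2.le))
        ((ae_restrict_iff' measurableSet_Ici).mpr (ae_of_all _ fun y _ => hfe0 y))
        (HasSubset.Subset.eventuallyLE (fun y hy => le_of_lt hy.1))
    calc (∫ z in (0:ℝ)..(u / 2), fe (u - z) * H z) ≤
        (∫ y in (u / 2)..u, fe y) * C := by rw [← h2]; exact h1
    _ ≤ ((u / 2) ^ (-(1 + ε)) * Me) * C :=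
        mul_le_mul_of_nonneg_right (h3.trans markovA) hC0
    _ = (u / 2) ^ (-(1 + ε)) * Me * C := rfl
  -- term 2
  have term2 : (∫ z in (u / 2)..u, fe (u - z) * H z) ≤
      Mξ * (u / 2) ^ (-(1 + ε)) := by
    have h1 : (∫ z in (u / 2)..u, fe (u - z) * H z) ≤
        ∫ z in (u / 2)..u, fe (u - z) * (Mξ * (u / 2) ^ (-(1 + ε))) := by
      refine intervalIntegral.integral_mono_on (by linarith) (iiP1.mono_set hsub2)
        ((ii1.mono_set hsub2).mul_const _) (fun z hz => ?_)
      have hz2 : 0 < z := lt_of_lt_of_le hu2 hz.1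
      have hb : H z ≤ Mξ * (u / 2) ^ (-(1 + ε)) := by
        refine (markovB z hz2).trans (mul_le_mul_of_nonneg_left ?_ hMξ0)
        exact Real.rpow_le_rpow_of_nonpos hu2 hz.1 (by linarith)
      exact mul_le_mul_of_nonneg_left hb (hfe0 _)
    have h2 : (∫ z in (u / 2)..u, fe (u - z) * (Mξ * (u / 2) ^ (-(1 + ε)))) =
        (∫ y in (0:ℝ)..(u / 2), fe y) * (Mξ * (u / 2) ^ (-(1 + ε))) := by
      rw [intervalIntegral.integral_mul_const]
      congr 1
      have := intervalIntegral.integral_comp_sub_left (a := u / 2) (b := u) fe u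
      rw [this, show u - u = (0:ℝ) by ring, show u - u / 2 = u / 2 by ring]
    have h3 : (∫ y in (0:ℝ)..(u / 2), fe y) ≤ 1 := by
      rw [intervalIntegral.integral_of_le hu2.le, ← hfe1]
      refine setIntegral_mono_set hfei
        ((ae_restrict_iff' measurableSet_Ici).mpr (ae_of_all _ fun y _ => hfe0 y))
        (HasSubset.Subset.eventuallyLE (fun y hy => le_of_lt hy.1))
    calc (∫ z in (u / 2)..u, fe (u - z) * H z) ≤
        (∫ y in (0:ℝ)..(u / 2), fe y) * (Mξ * (u / 2) ^ (-(1 + ε))) := h1.trans_eq h2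
    _ ≤ 1 * (Mξ * (u / 2) ^ (-(1 + ε))) :=
        mul_le_mul_of_nonneg_right h3 (mul_nonneg hMξ0 (Real.rpow_nonneg hu2.le _))
    _ = Mξ * (u / 2) ^ (-(1 + ε)) := one_mul _
  -- combine
  have hpow : (u / 2) ^ (-(1 + ε)) = 2 ^ (1 + ε) * u ^ (-(1 + ε)) := by
    rw [Real.rpow_neg hu2.le, Real.div_rpow hu.le (by norm_num), Real.rpow_neg hu.le]
    have h2p : (0:ℝ) < (2:ℝ) ^ (1 + ε) := Real.rpow_pos_of_pos (by norm_num) _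
    have hup : (0:ℝ) < u ^ (1 + ε) := Real.rpow_pos_of_pos hu _
    field_simp
  have hupow : 0 ≤ u ^ (-(1 + ε)) := Real.rpow_nonneg hu.le _
  have h2pow : (0:ℝ) < (2:ℝ) ^ (1 + ε) := Real.rpow_pos_of_pos (by norm_num) _
  calc (∫ z in (0:ℝ)..u, (fe (u - z) - fe (x + (u - z))) * H z) ≤
      (∫ z in (0:ℝ)..(u / 2), fe (u - z) * H z) +
        ∫ z in (u / 2)..u, fe (u - z) * H z := step1.trans_eq split
  _ ≤ (u / 2) ^ (-(1 + ε)) * Me * C + Mξ * (u / 2) ^ (-(1 + ε)) := add_le_add term1 term2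
  _ = (Me * C + Mξ) * ((2:ℝ) ^ (1 + ε) * u ^ (-(1 + ε))) := by rw [hpow]; ring
  _ ≤ (Me * C + Mξ) * (((2:ℝ) ^ (1 + ε) + 1) * u ^ (-(1 + ε))) := by
      refine mul_le_mul_of_nonneg_left ?_ (by positivity)
      exact mul_le_mul_of_nonneg_right (by linarith) hupow
  _ = ((2:ℝ) ^ (1 + ε) + 1) * (Me * C + Mξ) * u ^ (-(1 + ε)) := by ring
end
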